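/- For a signed graph Σ on [n] with no positive loops and no free loops, χ_Σ(k) = Σ_{i=0}^{n} W_{n-i} · 2^i · (k)_i, where W_j is the number of elements of rank j in the poset P(Σ) and (k)_i = k(k-1)⋯(k-i+1). -/

import Mathlib

open Equiv Finset

/-- A signed edge on vertex type `V`: a full edge (possibly a loop when the
endpoints agree), a half edge, or a free loop. The Bool `s` is the sign,
`true` meaning `+1` and `false` meaning `-1`. -/
inductive SEdge (V : Type*) where
  | full (i j : V) (s : Bool)
  | half (i : V) (s : Bool)
  | free

/-- A signed graph: an index type of edges together with edge data. -/
structure SGraph (V : Type*) where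
  E : Type
  edge : E → SEdge V

/-- Properness of a coloring at a single edge. -/
def properAt {V : Type*} (σ : V → ℤ) : SEdge V → Prop
  | .full i j s => σ i ≠ (if s then σ j else -σ j)
  | .half i _ => σ i ≠ 0
  | .free => False

/-- A proper signed `k`-coloring: values in `[-k,k] ∩ ℤ`, proper at every edge. -/
def Proper {V : Type*} (G : SGraph V) (k : ℕ) (σ : V → ℤ) : Prop :=
  (∀ i, |σ i| ≤ (k : ℤ)) ∧ ∀ e, properAt σ (G.edge e)

/-- The signed chromatic polynomial evaluated at `k`. -/
noncomputable def chrom {V : Type*} (G : SGraph V) (k : ℕ) : ℕ :=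
  Nat.card {σ : V → ℤ // Proper G k σ}

/-- The hyperplane (subset of `ℝⁿ`) attached to a signed edge. -/
def hypOfEdge {n : ℕ} : SEdge (Fin n) → Set (Fin n → ℝ)
  | .full i j s => {x | x i = if s then x j else -x j}
  | .half i _ => {x | x i = 0}
  | .free => Set.univ

/-- The signed graphic arrangement of `G`. -/
def arr {n : ℕ} (G : SGraph (Fin n)) : Set (Set (Fin n → ℝ)) :=
  {H | ∃ e, H = hypOfEdge (G.edge e)}

/-- The action of a signed permutation `(b, δ)` on signed edges. -/
def actEdge {n : ℕ} (b : Equiv.Perm (Fin n)) (δ : Finset (Fin n)) :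
    SEdge (Fin n) → SEdge (Fin n)
  | .full i j s => .full (b i) (b j)
      (xor s (decide (Odd ((({b i, b j} : Finset (Fin n))) ∩ δ).card)))
  | .half i s => .half (b i)
      (xor s (decide (Odd ((({b i} : Finset (Fin n))) ∩ δ).card)))
  | .free => .free

/-- `(b, δ)` is an automorphism of the signed graph `G`: it fixes the edge
multiset of `G`. -/
def IsAut {n : ℕ} (b : Equiv.Perm (Fin n)) (δ : Finset (Fin n)) (G : SGraph (Fin n)) : Prop :=
  ∃ φ : Equiv.Perm G.E, ∀ e, G.edge (φ e) = actEdge b δ (G.edge e)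

/-- The action of a signed permutation on points of `ℝⁿ` (coordinate form). -/
def actR {n : ℕ} (b : Equiv.Perm (Fin n)) (δ : Finset (Fin n)) (x : Fin n → ℝ) : Fin n → ℝ :=
  fun i => (if i ∈ δ then (-1 : ℝ) else 1) * x (b⁻¹ i)

/-- The action of a signed permutation on integer colorings. -/
def actZ {n : ℕ} (b : Equiv.Perm (Fin n)) (δ : Finset (Fin n)) (σ : Fin n → ℤ) : Fin n → ℤ :=
  fun i => (if i ∈ δ then (-1 : ℤ) else 1) * σ (b⁻¹ i)

/-- The fixed flat `β̂` of the signed permutation `β = (b, δ)`. -/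
def flatOf {n : ℕ} (b : Equiv.Perm (Fin n)) (δ : Finset (Fin n)) : Set (Fin n → ℝ) :=
  ⋂ i : Fin n, {x : Fin n → ℝ | x i = (if i ∈ δ then (-1 : ℝ) else 1) * x (b⁻¹ i)}

/-- The cycle (as a finset) of `b` containing `i`. -/
def cyc {n : ℕ} (b : Equiv.Perm (Fin n)) (i : Fin n) : Finset (Fin n) :=
  Finset.univ.filter (b.SameCycle i)

lemma mem_cyc_self {n : ℕ} (b : Equiv.Perm (Fin n)) (i : Fin n) : i ∈ cyc b i := by
  simp [cyc, Equiv.Perm.SameCycle.refl]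

/-- `|C_s ∩ δ|` is even, where `C_s` is the cycle of `i`. -/
def evenCyc {n : ℕ} (b : Equiv.Perm (Fin n)) (δ : Finset (Fin n)) (i : Fin n) : Prop :=
  Even ((cyc b i ∩ δ).card)

instance {n : ℕ} (b : Equiv.Perm (Fin n)) (δ : Finset (Fin n)) (i : Fin n) :
    Decidable (evenCyc b δ i) := by unfold evenCyc; infer_instance

/-- The minimal element of the cycle of `b` containing `i`. -/
def minCyc {n : ℕ} (b : Equiv.Perm (Fin n)) (i : Fin n) : Fin n :=
  (cyc b i).min' ⟨i, mem_cyc_self b i⟩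

lemma sameCycle_minCyc {n : ℕ} (b : Equiv.Perm (Fin n)) (i : Fin n) :
    b.SameCycle (minCyc b i) i := by
  have h : minCyc b i ∈ cyc b i := (cyc b i).min'_mem _
  simp only [cyc, Finset.mem_filter] at h
  exact h.2.symm

/-- The minimal positive `l` with `b^l(k) = i`, where `k` is the minimal
element of the cycle of `i`. -/
def pathLen {n : ℕ} (b : Equiv.Perm (Fin n)) (i : Fin n) : ℕ :=
  Nat.find (p := fun l => 0 < l ∧ (b ^ l) (minCyc b i) = i)
    (by
      obtain ⟨l, hl, _, h⟩ := Equiv.Perm.SameCycle.exists_pow_eq b (sameCycle_minCyc b i)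
      exact ⟨l, hl, h⟩)

/-- `β_(i) = |δ ∩ {b(k), b²(k), …, b^l(k) = i}|`. -/
def betaN {n : ℕ} (b : Equiv.Perm (Fin n)) (δ : Finset (Fin n)) (i : Fin n) : ℕ :=
  (((Finset.Icc 1 (pathLen b i)).image fun t => (b ^ t) (minCyc b i)) ∩ δ).card

/-- The vertex set of the quotient graph `Σ/β`: cycles of `b` having even
intersection with `δ`. -/
def QV {n : ℕ} (b : Equiv.Perm (Fin n)) (δ : Finset (Fin n)) : Type :=
  {C : Finset (Fin n) // (∃ i, C = cyc b i) ∧ Even ((C ∩ δ).card)}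

/-- The quotient vertex attached to `i ∈ [n]` whose cycle meets `δ` evenly. -/
def qv {n : ℕ} (b : Equiv.Perm (Fin n)) (δ : Finset (Fin n)) (i : Fin n)
    (h : evenCyc b δ i) : QV b δ := ⟨cyc b i, ⟨i, rfl⟩, h⟩

/-- The quotient of a signed edge by a signed permutation. -/
def quotEdge {n : ℕ} (b : Equiv.Perm (Fin n)) (δ : Finset (Fin n)) :
    SEdge (Fin n) → SEdge (QV b δ)
  | .free => .free
  | .half i s => if h : evenCyc b δ i then .half (qv b δ i h) s else .free
  | .full i j s =>
      if _hij : b.SameCycle i j then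
        if h : evenCyc b δ i then
          if i = j then .full (qv b δ i h) (qv b δ i h) s
          else .full (qv b δ i h) (qv b δ i h) false
        else .free
      else
        if hi : evenCyc b δ i then
          if hj : evenCyc b δ j then
            .full (qv b δ i hi) (qv b δ j hj)
              (xor s (decide (Odd (betaN b δ i + betaN b δ j))))
          else .half (qv b δ i hi) false
        else
          if hj : evenCyc b δ j then .half (qv b δ j hj) false else .free

/-- The quotient signed graph `Σ/β`. -/
def quotG {n : ℕ} (G : SGraph (Fin n)) (b : Equiv.Perm (Fin n)) (δ : Finset (Fin n)) :
    SGraph (QV b δ) := ⟨G.E, fun e => quotEdge b δ (G.edge e)⟩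

/-- `G` has no positive loops and no free loops. -/
def NoBadLoops {n : ℕ} (G : SGraph (Fin n)) : Prop :=
  ∀ e, (∀ i, G.edge e ≠ .full i i true) ∧ G.edge e ≠ .free

/-- The type-BC Coxeter arrangement in dimension `n`. -/
def BCn (n : ℕ) : Set (Set (Fin n → ℝ)) :=
  {H | (∃ i j : Fin n, i ≠ j ∧
      (H = {x | x i = x j} ∨ H = {x | x i = -x j})) ∨
    ∃ i : Fin n, H = {x | x i = 0}}

/-- A flat of the intersection lattice `L(BC_n)`: an intersection of a
subcollection of the hyperplanes (the empty intersection being `ℝⁿ`). -/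
def IsFlat (n : ℕ) (p : Set (Fin n → ℝ)) : Prop :=
  ∃ S ⊆ BCn n, p = ⋂₀ S

/-- The rank (codimension) of a flat. -/
noncomputable def rk (n : ℕ) (p : Set (Fin n → ℝ)) : ℕ :=
  n - Module.finrank ℝ (Submodule.span ℝ p)

/-- The complement of the signed graphic arrangement of `G`. -/
def compl {n : ℕ} (G : SGraph (Fin n)) : Set (Fin n → ℝ) :=
  {x | ∀ e, x ∉ hypOfEdge (G.edge e)}

/-- A region of the signed graphic arrangement: a connected component of the
complement. -/
def IsRegion {n : ℕ} (G : SGraph (Fin n)) (r : Set (Fin n → ℝ)) : Prop :=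
  ∃ x ∈ compl G, r = connectedComponentIn (compl G) x

open Finset

namespace CP
variable {n : ℕ}

/-- `p` forces coordinate `i` to vanish. -/
def zp (p : Set (Fin n → ℝ)) (i : Fin n) : Prop := p ⊆ {y | y i = 0}
/-- `p` forces `y i = y j`. -/
def ep (p : Set (Fin n → ℝ)) (i j : Fin n) : Prop := p ⊆ {y | y i = y j}
/-- `p` forces `y i = - y j`. -/
def mp (p : Set (Fin n → ℝ)) (i j : Fin n) : Prop := p ⊆ {y | y i = -y j}

variable {p : Set (Fin n → ℝ)} {i j l : Fin n}

lemma ep_refl (p : Set (Fin n → ℝ)) (i : Fin n) : ep p i i := fun _ _ => rfl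
lemma ep_symm (h : ep p i j) : ep p j i := fun x hx => (h hx).symm
lemma mp_symm (h : mp p i j) : mp p j i := fun x hx => by
  have := h hx; simp only [Set.mem_setOf_eq] at *; linarith
lemma ep_trans (h1 : ep p i j) (h2 : ep p j l) : ep p i l := fun x hx => by
  have := h1 hx; have := h2 hx; simp only [Set.mem_setOf_eq] at *; linarith
lemma ep_mp (h1 : ep p i j) (h2 : mp p j l) : mp p i l := fun x hx => by
  have := h1 hx; have := h2 hx; simp only [Set.mem_setOf_eq] at *; linarith
lemma mp_ep (h1 : mp p i j) (h2 : ep p j l) : mp p i l := fun x hx => by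
  have := h1 hx; have := h2 hx; simp only [Set.mem_setOf_eq] at *; linarith
lemma mp_mp (h1 : mp p i j) (h2 : mp p j l) : ep p i l := fun x hx => by
  have := h1 hx; have := h2 hx; simp only [Set.mem_setOf_eq] at *; linarith
lemma ep_mp_zp_right (h1 : ep p i j) (h2 : mp p i j) : zp p j := fun x hx => by
  have := h1 hx; have := h2 hx; simp only [Set.mem_setOf_eq] at *; linarith
lemma ep_mp_zp_left (h1 : ep p i j) (h2 : mp p i j) : zp p i := fun x hx => by
  have := h1 hx; have := h2 hx; simp only [Set.mem_setOf_eq] at *; linarith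
lemma zp_ep (h1 : zp p i) (h2 : ep p i j) : zp p j := fun x hx => by
  have := h1 hx; have := h2 hx; simp only [Set.mem_setOf_eq] at *; linarith
lemma zp_mp (h1 : zp p i) (h2 : mp p i j) : zp p j := fun x hx => by
  have := h1 hx; have := h2 hx; simp only [Set.mem_setOf_eq] at *; linarith
lemma zp_zp_ep (h1 : zp p i) (h2 : zp p j) : ep p i j := fun x hx => by
  have := h1 hx; have := h2 hx; simp only [Set.mem_setOf_eq] at *; linarith
lemma zp_zp_mp (h1 : zp p i) (h2 : zp p j) : mp p i j := fun x hx => by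
  have := h1 hx; have := h2 hx; simp only [Set.mem_setOf_eq] at *; linarith
lemma mp_self_iff_zp : mp p i i ↔ zp p i := by
  constructor
  · intro h x hx; have := h hx; simp only [Set.mem_setOf_eq] at *; linarith
  · intro h x hx; have := h hx; simp only [Set.mem_setOf_eq] at *; linarith

/-- The equivalence relation combining `ep` and `mp`. -/
def rel (p : Set (Fin n → ℝ)) (i j : Fin n) : Prop := ep p i j ∨ mp p i j

lemma rel_refl (p : Set (Fin n → ℝ)) (i : Fin n) : rel p i i := Or.inl (ep_refl p i)
lemma rel_symm (h : rel p i j) : rel p j i := h.imp ep_symm mp_symm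
lemma rel_trans (h1 : rel p i j) (h2 : rel p j l) : rel p i l := by
  rcases h1 with h1 | h1 <;> rcases h2 with h2 | h2
  · exact Or.inl (ep_trans h1 h2)
  · exact Or.inr (ep_mp h1 h2)
  · exact Or.inr (mp_ep h1 h2)
  · exact Or.inl (mp_mp h1 h2)
lemma zp_rel (h1 : zp p i) (h2 : rel p i j) : zp p j := by
  rcases h2 with h2 | h2
  · exact zp_ep h1 h2
  · exact zp_mp h1 h2

open scoped Classical in
/-- The `rel`-class of `i` as a finset. -/
noncomputable def cls (p : Set (Fin n → ℝ)) (i : Fin n) : Finset (Fin n) :=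
  Finset.univ.filter (rel p i)

lemma mem_cls_iff {x : Fin n} : x ∈ cls p i ↔ rel p i x := by
  classical simp [cls]

lemma cls_nonempty (p : Set (Fin n → ℝ)) (i : Fin n) : (cls p i).Nonempty :=
  ⟨i, mem_cls_iff.2 (rel_refl p i)⟩

/-- The minimal representative of the class of `i`. -/
noncomputable def rep (p : Set (Fin n → ℝ)) (i : Fin n) : Fin n :=
  (cls p i).min' (cls_nonempty p i)

lemma rel_rep (p : Set (Fin n → ℝ)) (i : Fin n) : rel p i (rep p i) :=
  mem_cls_iff.1 ((cls p i).min'_mem _)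

lemma cls_eq_of_rel (h : rel p i j) : cls p i = cls p j := by
  ext x; simp only [mem_cls_iff]
  exact ⟨fun hx => rel_trans (rel_symm h) hx, fun hx => rel_trans h hx⟩

lemma rep_eq_of_rel (h : rel p i j) : rep p i = rep p j := by
  unfold rep; congr 1; exact cls_eq_of_rel h

lemma rep_rep (p : Set (Fin n → ℝ)) (i : Fin n) : rep p (rep p i) = rep p i :=
  (rep_eq_of_rel (rel_rep p i)).symm

lemma zp_rep_iff : zp p (rep p i) ↔ zp p i :=
  ⟨fun h => zp_rel h (rel_symm (rel_rep p i)), fun h => zp_rel h (rel_rep p i)⟩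

open scoped Classical in
/-- The sign relating `i` to its class representative. -/
noncomputable def sgn (p : Set (Fin n → ℝ)) (i : Fin n) : ℤ :=
  if ep p (rep p i) i then 1 else -1

lemma sgn_cases (p : Set (Fin n → ℝ)) (i : Fin n) : sgn p i = 1 ∨ sgn p i = -1 := by
  classical unfold sgn; split <;> simp

lemma sgn_ne_zero (p : Set (Fin n → ℝ)) (i : Fin n) : sgn p i ≠ 0 := by
  rcases sgn_cases p i with h | h <;> omega

lemma sgn_eq_one_iff (hi : ¬ zp p i) : sgn p i = 1 ↔ ep p (rep p i) i := by
  classical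
  unfold sgn; split <;> simp_all

lemma mp_rep_iff (hi : ¬ zp p i) : mp p (rep p i) i ↔ ¬ ep p (rep p i) i := by
  constructor
  · intro hm he; exact hi (ep_mp_zp_right he hm)
  · intro he
    rcases rel_symm (rel_rep p i) with h | h
    · exact absurd h he
    · exact h

lemma sgn_eq_neg_one_iff (hi : ¬ zp p i) : sgn p i = -1 ↔ mp p (rep p i) i := by
  classical
  rw [mp_rep_iff hi]
  unfold sgn; split <;> simp_all

lemma rep_sgn_rel (hi : ¬ zp p i) :
    (sgn p i = 1 ∧ ep p (rep p i) i) ∨ (sgn p i = -1 ∧ mp p (rep p i) i) := by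
  rcases sgn_cases p i with h | h
  · exact Or.inl ⟨h, (sgn_eq_one_iff hi).1 h⟩
  · exact Or.inr ⟨h, (sgn_eq_neg_one_iff hi).1 h⟩

lemma ep_iff_sgn (hi : ¬ zp p i) (hj : ¬ zp p j) :
    ep p i j ↔ (rep p i = rep p j ∧ sgn p i = sgn p j) := by
  constructor
  · intro h
    have hr : rep p i = rep p j := rep_eq_of_rel (Or.inl h)
    refine ⟨hr, ?_⟩
    rcases rep_sgn_rel (p := p) hi with ⟨h1, h2⟩ | ⟨h1, h2⟩
    · have : ep p (rep p j) j := ep_trans (hr ▸ h2) h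
      rw [h1, (sgn_eq_one_iff hj).2 this]
    · have : mp p (rep p j) j := mp_ep (hr ▸ h2) h
      rw [h1, (sgn_eq_neg_one_iff hj).2 this]
  · rintro ⟨hr, hs⟩
    rcases rep_sgn_rel (p := p) hi with ⟨h1, h2⟩ | ⟨h1, h2⟩
    · have hj1 : ep p (rep p j) j := (sgn_eq_one_iff hj).1 (hs ▸ h1)
      exact ep_trans (ep_symm h2) (hr ▸ hj1)
    · have hj1 : mp p (rep p j) j := (sgn_eq_neg_one_iff hj).1 (hs ▸ h1)
      exact mp_mp (mp_symm h2) (hr ▸ hj1)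

lemma mp_iff_sgn (hi : ¬ zp p i) (hj : ¬ zp p j) :
    mp p i j ↔ (rep p i = rep p j ∧ sgn p i = -sgn p j) := by
  constructor
  · intro h
    have hr : rep p i = rep p j := rep_eq_of_rel (Or.inr h)
    refine ⟨hr, ?_⟩
    rcases rep_sgn_rel (p := p) hi with ⟨h1, h2⟩ | ⟨h1, h2⟩
    · have : mp p (rep p j) j := ep_mp (hr ▸ h2) h
      rw [h1, (sgn_eq_neg_one_iff hj).2 this]; norm_num
    · have : ep p (rep p j) j := mp_mp (hr ▸ h2) h
      rw [h1, (sgn_eq_one_iff hj).2 this]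
  · rintro ⟨hr, hs⟩
    rcases rep_sgn_rel (p := p) hi with ⟨h1, h2⟩ | ⟨h1, h2⟩
    · have : sgn p j = -1 := by omega
      have hj1 : mp p (rep p j) j := (sgn_eq_neg_one_iff hj).1 this
      exact ep_mp (ep_symm h2) (hr ▸ hj1)
    · have : sgn p j = 1 := by omega
      have hj1 : ep p (rep p j) j := (sgn_eq_one_iff hj).1 this
      exact mp_ep (mp_symm h2) (hr ▸ hj1)

open scoped Classical in
/-- Representatives of the nonzero classes. -/
noncomputable def RS (p : Set (Fin n → ℝ)) : Finset (Fin n) :=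
  Finset.univ.filter (fun i => ¬ zp p i ∧ rep p i = i)

lemma mem_RS_iff : i ∈ RS p ↔ ¬ zp p i ∧ rep p i = i := by
  classical simp [RS]

lemma rep_mem_RS (hi : ¬ zp p i) : rep p i ∈ RS p :=
  mem_RS_iff.2 ⟨fun h => hi (zp_rep_iff.1 h), rep_rep p i⟩

lemma sgn_of_mem_RS (hi : i ∈ RS p) : sgn p i = 1 := by
  rw [sgn_eq_one_iff (mem_RS_iff.1 hi).1, (mem_RS_iff.1 hi).2]
  exact ep_refl p i

end CP
namespace CP
variable {n : ℕ}
variable {p : Set (Fin n → ℝ)} {i j : Fin n}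

lemma cast_neg_iff (a b : ℤ) : ((a : ℝ) = -(b : ℝ)) ↔ a = -b := by
  rw [← Int.cast_neg]; exact Int.cast_inj

/-- Integer coloring viewed as a real point. -/
def cR (σ : Fin n → ℤ) : Fin n → ℝ := fun i => (σ i : ℝ)

/-- The smallest BC-flat containing the point `σ`. -/
def flatZ (σ : Fin n → ℤ) : Set (Fin n → ℝ) := ⋂₀ {H | H ∈ BCn n ∧ cR σ ∈ H}

lemma isFlat_flatZ (σ : Fin n → ℤ) : IsFlat n (flatZ σ) :=
  ⟨{H | H ∈ BCn n ∧ cR σ ∈ H}, fun _ hH => hH.1, rfl⟩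

lemma cR_mem_flatZ (σ : Fin n → ℤ) : cR σ ∈ flatZ σ :=
  Set.mem_sInter.2 fun _ hH => hH.2

lemma flatZ_subset_iff {σ : Fin n → ℤ} {H : Set (Fin n → ℝ)} (hH : H ∈ BCn n) :
    flatZ σ ⊆ H ↔ cR σ ∈ H :=
  ⟨fun h => h (cR_mem_flatZ σ), fun h => Set.sInter_subset_of_mem ⟨hH, h⟩⟩

lemma canon (hp : IsFlat n p) : p = ⋂₀ {H | H ∈ BCn n ∧ p ⊆ H} := by
  obtain ⟨S, hS, rfl⟩ := hp
  apply Set.Subset.antisymm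
  · exact fun x hx H hH => hH.2 hx
  · exact fun x hx => Set.mem_sInter.2 fun H hH =>
      Set.mem_sInter.1 hx H ⟨hS hH, Set.sInter_subset_of_mem hH⟩

lemma flatZ_eq_iff {σ : Fin n → ℤ} (hp : IsFlat n p) :
    flatZ σ = p ↔ ∀ H ∈ BCn n, (cR σ ∈ H ↔ p ⊆ H) := by
  constructor
  · intro h H hH
    rw [← flatZ_subset_iff hH, h]
  · intro h
    have hset : {H | H ∈ BCn n ∧ cR σ ∈ H} = {H | H ∈ BCn n ∧ p ⊆ H} := by
      ext H; exact and_congr_right fun hH => h H hH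
    rw [canon hp]
    unfold flatZ
    rw [hset]

/-- The combinatorial condition on an integer coloring whose minimal flat is `p`. -/
def Cond (p : Set (Fin n → ℝ)) (σ : Fin n → ℤ) : Prop :=
  (∀ i, (σ i = 0 ↔ zp p i)) ∧
    ∀ i j, (σ i = σ j ↔ ep p i j) ∧ (σ i = -σ j ↔ mp p i j)

lemma flatZ_eq_iff_cond {σ : Fin n → ℤ} (hp : IsFlat n p) :
    flatZ σ = p ↔ Cond p σ := by
  rw [flatZ_eq_iff hp]
  constructor
  · intro h
    have hz : ∀ i, (σ i = 0 ↔ zp p i) := by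
      intro i
      have := h {y | y i = 0} (Or.inr ⟨i, rfl⟩)
      simpa [cR, Set.mem_setOf_eq, zp] using this
    refine ⟨hz, fun i j => ⟨?_, ?_⟩⟩
    · by_cases hij : i = j
      · subst hij; simp [ep_refl]
      · have := h {y | y i = y j} (Or.inl ⟨i, j, hij, Or.inl rfl⟩)
        simp only [cR, Set.mem_setOf_eq] at this
        rw [show ((σ i : ℝ) = (σ j : ℝ) ↔ σ i = σ j) from Int.cast_inj] at this
        exact this
    · by_cases hij : i = j
      · subst hij
        rw [mp_self_iff_zp, ← hz i]
        omega
      · have := h {y | y i = -y j} (Or.inl ⟨i, j, hij, Or.inr rfl⟩)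
        simp only [cR, Set.mem_setOf_eq] at this
        rw [cast_neg_iff] at this
        exact this
  · rintro ⟨hz, hem⟩ H hH
    rcases hH with ⟨i, j, _, rfl | rfl⟩ | ⟨i, rfl⟩
    · simp only [cR, Set.mem_setOf_eq]
      rw [show ((σ i : ℝ) = (σ j : ℝ) ↔ σ i = σ j) from Int.cast_inj]
      exact (hem i j).1
    · simp only [cR, Set.mem_setOf_eq]
      rw [cast_neg_iff]
      exact (hem i j).2
    · simp only [cR, Set.mem_setOf_eq]
      rw [show ((σ i : ℝ) = 0 ↔ σ i = 0) from Int.cast_eq_zero]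
      exact hz i

lemma hyp_mem_BCn {G : SGraph (Fin n)} (hG : NoBadLoops G) (e : G.E) :
    hypOfEdge (G.edge e) ∈ BCn n := by
  obtain ⟨h1, h2⟩ := hG e
  cases hEdge : G.edge e with
  | full i j s =>
    by_cases hij : i = j
    · subst hij
      have hs : s = false := by
        cases s
        · rfl
        · exact absurd hEdge (h1 i)
      subst hs
      refine Or.inr ⟨i, ?_⟩
      ext x
      simp only [hypOfEdge, Set.mem_setOf_eq, if_neg (by simp : ¬(false = true))]
      constructor <;> intro h <;> linarith
    · refine Or.inl ⟨i, j, hij, ?_⟩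
      cases s
      · exact Or.inr (by simp [hypOfEdge])
      · exact Or.inl (by simp [hypOfEdge])
  | half i s => exact Or.inr ⟨i, rfl⟩
  | free => exact absurd hEdge h2

lemma properAt_iff (σ : Fin n → ℤ) (E : SEdge (Fin n)) :
    properAt σ E ↔ cR σ ∉ hypOfEdge E := by
  cases E with
  | full i j s =>
    refine not_congr ?_
    cases s <;>
      simp only [properAt, hypOfEdge, Set.mem_setOf_eq, cR, Bool.false_eq_true, if_false, if_true]
    · exact (cast_neg_iff _ _).symm
    · exact Int.cast_inj.symm
  | half i s =>
    refine not_congr ?_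
    simp only [hypOfEdge, Set.mem_setOf_eq, cR]
    exact Int.cast_eq_zero.symm
  | free => simp [properAt, hypOfEdge]

lemma proper_iff {G : SGraph (Fin n)} {k : ℕ} (hG : NoBadLoops G)
    (F : Finset (Set (Fin n → ℝ)))
    (hF : ∀ q, q ∈ F ↔ (IsFlat n q ∧ ∀ e, ¬ q ⊆ hypOfEdge (G.edge e)))
    (σ : Fin n → ℤ) :
    Proper G k σ ↔ ((∀ i, |σ i| ≤ (k : ℤ)) ∧ flatZ σ ∈ F) := by
  constructor
  · rintro ⟨h1, h2⟩
    refine ⟨h1, (hF _).2 ⟨isFlat_flatZ σ, fun e hsub => ?_⟩⟩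
    exact (properAt_iff σ _).1 (h2 e) ((flatZ_subset_iff (hyp_mem_BCn hG e)).1 hsub)
  · rintro ⟨h1, h2⟩
    refine ⟨h1, fun e => (properAt_iff σ _).2 fun hm => ?_⟩
    exact ((hF _).1 h2).2 e ((flatZ_subset_iff (hyp_mem_BCn hG e)).2 hm)

end CP
namespace CP
variable {n : ℕ} {p : Set (Fin n → ℝ)}

open scoped Classical in
lemma mem_flat_iff_reduced (hp : IsFlat n p) (x : Fin n → ℝ) :
    x ∈ p ↔ ∀ i, x i = (if zp p i then 0 else (sgn p i : ℝ) * x (rep p i)) := by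
  constructor
  · intro hx i
    by_cases hz : zp p i
    · rw [if_pos hz]; exact hz hx
    · rw [if_neg hz]
      rcases rep_sgn_rel (p := p) hz with ⟨h1, h2⟩ | ⟨h1, h2⟩ <;>
        [skip; skip] <;>
      · have := h2 hx
        simp only [Set.mem_setOf_eq] at this
        rw [h1]; push_cast; linarith
  · intro hx
    obtain ⟨S, hS, rfl⟩ := hp
    set p := ⋂₀ S with hpdef
    refine Set.mem_sInter.2 fun H hH => ?_
    have hsub : p ⊆ H := Set.sInter_subset_of_mem hH
    rcases hS hH with ⟨i, j, _, rfl | rfl⟩ | ⟨i, rfl⟩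
    · -- x i = x j
      have hep : ep p i j := hsub
      show x i = x j
      by_cases hz : zp p i
      · have hzj : zp p j := zp_ep hz hep
        rw [hx i, hx j, if_pos hz, if_pos hzj]
      · have hzj : ¬ zp p j := fun h => hz (zp_ep h (ep_symm hep))
        obtain ⟨hr, hs⟩ := (ep_iff_sgn hz hzj).1 hep
        rw [hx i, hx j, if_neg hz, if_neg hzj, hr, hs]
    · -- x i = -x j
      have hmp : mp p i j := hsub
      show x i = -x j
      by_cases hz : zp p i
      · have hzj : zp p j := zp_mp hz hmp
        rw [hx i, hx j, if_pos hz, if_pos hzj]; ring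
      · have hzj : ¬ zp p j := fun h => hz (zp_mp h (mp_symm hmp))
        obtain ⟨hr, hs⟩ := (mp_iff_sgn hz hzj).1 hmp
        rw [hx i, hx j, if_neg hz, if_neg hzj, hr, hs]
        push_cast
        ring
    · have hzi : zp p i := hsub
      show x i = 0
      rw [hx i, if_pos hzi]

open scoped Classical in
/-- Linear parametrization of a flat by its nonzero classes. -/
noncomputable def psi (p : Set (Fin n → ℝ)) : (↥(RS p) → ℝ) →ₗ[ℝ] (Fin n → ℝ) where
  toFun g := fun i => if h : zp p i then 0 else (sgn p i : ℝ) * g ⟨rep p i, rep_mem_RS h⟩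
  map_add' g1 g2 := by
    funext i
    by_cases h : zp p i <;> simp [h] <;> ring
  map_smul' c g := by
    funext i
    by_cases h : zp p i <;> simp [h] <;> ring

open scoped Classical in
lemma psi_apply (g : ↥(RS p) → ℝ) (i : Fin n) :
    psi p g i = if h : zp p i then 0 else (sgn p i : ℝ) * g ⟨rep p i, rep_mem_RS h⟩ := rfl

lemma psi_apply_rep (g : ↥(RS p) → ℝ) {i : Fin n} (h : ¬ zp p i) :
    psi p g (rep p i) = g ⟨rep p i, rep_mem_RS h⟩ := by
  classical
  have hz : ¬ zp p (rep p i) := fun hz => h (zp_rep_iff.1 hz)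
  rw [psi_apply, dif_neg hz]
  have h1 : sgn p (rep p i) = 1 := sgn_of_mem_RS (rep_mem_RS h)
  have h2 : (⟨rep p (rep p i), rep_mem_RS hz⟩ : ↥(RS p)) = ⟨rep p i, rep_mem_RS h⟩ :=
    Subtype.ext (rep_rep p i)
  rw [h1, h2]
  push_cast
  ring

open scoped Classical in
lemma psi_mem (hp : IsFlat n p) (g : ↥(RS p) → ℝ) : psi p g ∈ p := by
  rw [mem_flat_iff_reduced hp]
  intro i
  by_cases h : zp p i
  · rw [if_pos h, psi_apply, dif_pos h]
  · rw [if_neg h, psi_apply, dif_neg h, psi_apply_rep g h]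

open scoped Classical in
lemma psi_restrict (hp : IsFlat n p) {x : Fin n → ℝ} (hx : x ∈ p) :
    psi p (fun r => x r) = x := by
  funext i
  rw [psi_apply]
  by_cases h : zp p i
  · rw [dif_pos h]
    exact ((mem_flat_iff_reduced hp x).1 hx i).trans (if_pos h) |>.symm
  · rw [dif_neg h]
    exact (((mem_flat_iff_reduced hp x).1 hx i).trans (if_neg h)).symm

lemma psi_inj : Function.Injective (psi p) := by
  classical
  intro g1 g2 h
  funext r
  obtain ⟨hz, hrep⟩ := mem_RS_iff.1 r.2
  have hc := congrFun h (r : Fin n)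
  rw [psi_apply, psi_apply, dif_neg hz, dif_neg hz] at hc
  have h1 : sgn p (r : Fin n) = 1 := sgn_of_mem_RS r.2
  have h2 : (⟨rep p (r : Fin n), rep_mem_RS hz⟩ : ↥(RS p)) = r := Subtype.ext hrep
  rw [h1, h2] at hc
  push_cast at hc
  simpa using hc

lemma range_psi (hp : IsFlat n p) : Set.range (psi p) = p :=
  Set.Subset.antisymm (fun _ ⟨g, hg⟩ => hg ▸ psi_mem hp g)
    (fun x hx => ⟨fun r => x r, psi_restrict hp hx⟩)

lemma finrank_span_eq (hp : IsFlat n p) :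
    Module.finrank ℝ (Submodule.span ℝ p) = (RS p).card := by
  have h1 : Submodule.span ℝ p = LinearMap.range (psi p) := by
    conv_lhs => rw [← range_psi hp]
    rw [← LinearMap.coe_range, Submodule.span_eq]
  rw [h1, LinearMap.finrank_range_of_inj psi_inj,
    Module.finrank_fintype_fun_eq_card, Fintype.card_coe]

lemma card_RS_le (p : Set (Fin n → ℝ)) : (RS p).card ≤ n := by
  simpa using Finset.card_le_univ (RS p)

lemma rk_eq (hp : IsFlat n p) : rk n p = n - (RS p).card := by
  unfold rk
  rw [finrank_span_eq hp]

end CP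
namespace CP
variable {n : ℕ} {p : Set (Fin n → ℝ)} {k : ℕ}

/-- The box of integer colorings with entries in `[-k,k]`. -/
noncomputable def Bx (n k : ℕ) : Finset (Fin n → ℤ) :=
  Fintype.piFinset fun _ : Fin n => Finset.Icc (-(k : ℤ)) (k : ℤ)

lemma mem_Bx {σ : Fin n → ℤ} : σ ∈ Bx n k ↔ ∀ i, |σ i| ≤ (k : ℤ) := by
  simp [Bx, Fintype.mem_piFinset, Finset.mem_Icc, abs_le]

lemma cond_ne_zero {σ : Fin n → ℤ} (hC : Cond p σ) {i : Fin n} (h : ¬ zp p i) :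
    σ i ≠ 0 := fun h0 => h ((hC.1 i).1 h0)

lemma cond_rel {σ : Fin n → ℤ} (hC : Cond p σ) {r r' : Fin n}
    (h : (σ r).natAbs = (σ r').natAbs) : rel p r r' := by
  rcases Int.natAbs_eq_natAbs_iff.1 h with h1 | h1
  · exact Or.inl ((hC.2 r r').1.1 h1)
  · exact Or.inr ((hC.2 r r').2.1 h1)

open scoped Classical in
/-- The coloring built from a sign and value assignment on the class representatives. -/
noncomputable def bld (p : Set (Fin n → ℝ)) (s : ↥(RS p) → Bool) (v : ↥(RS p) ↪ Fin k)
    (i : Fin n) : ℤ :=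
  if h : zp p i then 0
  else sgn p i * (if s ⟨rep p i, rep_mem_RS h⟩ then 1 else -1) *
    (((v ⟨rep p i, rep_mem_RS h⟩ : Fin k) : ℤ) + 1)

open scoped Classical in
lemma bld_zero {s : ↥(RS p) → Bool} {v : ↥(RS p) ↪ Fin k} {i : Fin n} (h : zp p i) :
    bld p s v i = 0 := dif_pos h

open scoped Classical in
lemma bld_repr {s : ↥(RS p) → Bool} {v : ↥(RS p) ↪ Fin k} {i : Fin n} (h : ¬ zp p i) :
    bld p s v i = ((v ⟨rep p i, rep_mem_RS h⟩ : Fin k) : ℤ) + 1 ∨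
      bld p s v i = -(((v ⟨rep p i, rep_mem_RS h⟩ : Fin k) : ℤ) + 1) := by
  rw [bld, dif_neg h]
  rcases sgn_cases p i with h1 | h1 <;> rw [h1] <;>
    cases hb : s ⟨rep p i, rep_mem_RS h⟩ <;> simp [hb] <;> ring_nf <;> simp
lemma bld_val_bounds {v : ↥(RS p) ↪ Fin k} (r : ↥(RS p)) :
    1 ≤ ((v r : Fin k) : ℤ) + 1 ∧ ((v r : Fin k) : ℤ) + 1 ≤ (k : ℤ) := by
  have := (v r).is_lt
  omega

open scoped Classical in
lemma bld_cmp {s : ↥(RS p) → Bool} {v : ↥(RS p) ↪ Fin k} {i j : Fin n}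
    (hi : ¬ zp p i) (hj : ¬ zp p j) :
    (bld p s v i = bld p s v j ↔ (rep p i = rep p j ∧ sgn p i = sgn p j)) ∧
    (bld p s v i = -bld p s v j ↔ (rep p i = rep p j ∧ sgn p i = -sgn p j)) := by
  by_cases hr : rep p i = rep p j
  · have hsub : (⟨rep p i, rep_mem_RS hi⟩ : ↥(RS p)) = ⟨rep p j, rep_mem_RS hj⟩ :=
      Subtype.ext hr
    rw [bld, bld, dif_neg hi, dif_neg hj, hsub]
    set u : ℤ := if s ⟨rep p j, rep_mem_RS hj⟩ then 1 else -1 with hu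
    set a : ℤ := ((v ⟨rep p j, rep_mem_RS hj⟩ : Fin k) : ℤ) + 1 with ha
    have ha1 : 1 ≤ a := (bld_val_bounds _).1
    have hu1 : u = 1 ∨ u = -1 := by rw [hu]; split <;> simp
    have hua : u * a ≠ 0 := by
      rcases hu1 with h | h <;> rw [h] <;> intro hc <;> omega
    constructor
    · constructor
      · intro h
        refine ⟨hr, ?_⟩
        have h' : sgn p i * (u * a) = sgn p j * (u * a) := by linear_combination h
        exact mul_right_cancel₀ hua h'
      · rintro ⟨-, h⟩; rw [h]
    · constructor
      · intro h
        refine ⟨hr, ?_⟩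
        have h' : sgn p i * (u * a) = (-sgn p j) * (u * a) := by linear_combination h
        exact mul_right_cancel₀ hua h'
      · rintro ⟨-, h⟩; rw [h]; ring
  · have hne : (⟨rep p i, rep_mem_RS hi⟩ : ↥(RS p)) ≠ ⟨rep p j, rep_mem_RS hj⟩ :=
      fun h => hr (congrArg Subtype.val h)
    have hv' : v ⟨rep p i, rep_mem_RS hi⟩ ≠ v ⟨rep p j, rep_mem_RS hj⟩ :=
      fun h => hne (v.injective h)
    have hv : ((v ⟨rep p i, rep_mem_RS hi⟩ : Fin k) : ℤ) ≠
        ((v ⟨rep p j, rep_mem_RS hj⟩ : Fin k) : ℤ) := by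
      intro h
      exact hv' (Fin.ext (by exact_mod_cast h))
    rcases bld_repr (s := s) (v := v) hi with h1 | h1 <;>
      rcases bld_repr (s := s) (v := v) hj with h2 | h2 <;>
    · constructor
      · exact iff_of_false (by omega) (fun h => hr h.1)
      · exact iff_of_false (by omega) (fun h => hr h.1)

open scoped Classical in
lemma bld_cond (s : ↥(RS p) → Bool) (v : ↥(RS p) ↪ Fin k) : Cond p (bld p s v) := by
  have hnz : ∀ i, ¬ zp p i → bld p s v i ≠ 0 := by
    intro i h
    rcases bld_repr (s := s) (v := v) h with h1 | h1 <;>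
      have := bld_val_bounds (v := v) ⟨rep p i, rep_mem_RS h⟩ <;> omega
  constructor
  · intro i
    by_cases h : zp p i
    · exact iff_of_true (bld_zero h) h
    · exact iff_of_false (hnz i h) h
  · intro i j
    by_cases hi : zp p i <;> by_cases hj : zp p j
    · constructor
      · exact iff_of_true (by rw [bld_zero hi, bld_zero hj]) (zp_zp_ep hi hj)
      · exact iff_of_true (by rw [bld_zero hi, bld_zero hj]; ring) (zp_zp_mp hi hj)
    · constructor
      · exact iff_of_false (by rw [bld_zero hi]; exact fun h => hnz j hj h.symm)
          (fun h => hj (zp_ep hi h))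
      · exact iff_of_false (by rw [bld_zero hi]; intro h; exact hnz j hj (by omega))
          (fun h => hj (zp_mp hi h))
    · constructor
      · exact iff_of_false (by rw [bld_zero hj]; exact hnz i hi)
          (fun h => hi (zp_ep hj (ep_symm h)))
      · exact iff_of_false (by rw [bld_zero hj]; intro h; exact hnz i hi (by omega))
          (fun h => hi (zp_mp hj (mp_symm h)))
    · constructor
      · rw [(bld_cmp hi hj).1]
        exact (ep_iff_sgn hi hj).symm
      · rw [(bld_cmp hi hj).2]
        exact (mp_iff_sgn hi hj).symm

open scoped Classical in
lemma bld_mem_Bx (s : ↥(RS p) → Bool) (v : ↥(RS p) ↪ Fin k) : bld p s v ∈ Bx n k := by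
  rw [mem_Bx]
  intro i
  by_cases h : zp p i
  · rw [bld_zero h]; simp
  · rcases bld_repr (s := s) (v := v) h with h1 | h1 <;>
      have := bld_val_bounds (v := v) ⟨rep p i, rep_mem_RS h⟩ <;>
      rw [h1] <;> rw [abs_le] <;> omega

end CP
namespace CP
variable {n : ℕ} {p : Set (Fin n → ℝ)} {k : ℕ}

open scoped Classical in
lemma fwd_lt {σ' : {σ : Fin n → ℤ // σ ∈ (Bx n k).filter (fun σ => Cond p σ)}}
    (r : ↥(RS p)) : (σ'.1 (r : Fin n)).natAbs - 1 < k := by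
  obtain ⟨hB, hC⟩ := Finset.mem_filter.1 σ'.2
  have h1 : σ'.1 (r : Fin n) ≠ 0 := cond_ne_zero hC (mem_RS_iff.1 r.2).1
  have h2 := abs_le.1 (mem_Bx.1 hB (r : Fin n))
  omega

open scoped Classical in
/-- Forward map: the value data of a coloring. -/
noncomputable def fwdV (σ' : {σ : Fin n → ℤ // σ ∈ (Bx n k).filter (fun σ => Cond p σ)}) :
    ↥(RS p) ↪ Fin k :=
  ⟨fun r => ⟨(σ'.1 (r : Fin n)).natAbs - 1, fwd_lt r⟩, by
    intro r r' h
    obtain ⟨hB, hC⟩ := Finset.mem_filter.1 σ'.2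
    have hab : (σ'.1 (r : Fin n)).natAbs = (σ'.1 (r' : Fin n)).natAbs := by
      have h1 : σ'.1 (r : Fin n) ≠ 0 := cond_ne_zero hC (mem_RS_iff.1 r.2).1
      have h1' : σ'.1 (r' : Fin n) ≠ 0 := cond_ne_zero hC (mem_RS_iff.1 r'.2).1
      have h2 := congrArg Fin.val h
      simp only at h2
      omega
    have hrep := rep_eq_of_rel (cond_rel hC hab)
    exact Subtype.ext
      (by rw [← (mem_RS_iff.1 r.2).2, ← (mem_RS_iff.1 r'.2).2]; exact hrep)⟩

open scoped Classical in
lemma bld_fwd (σ' : {σ : Fin n → ℤ // σ ∈ (Bx n k).filter (fun σ => Cond p σ)}) :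
    bld p (fun r => decide (0 < σ'.1 (r : Fin n))) (fwdV σ') = σ'.1 := by
  obtain ⟨σ, hσ⟩ := σ'
  dsimp only
  obtain ⟨hB, hC⟩ := Finset.mem_filter.1 hσ
  funext i
  by_cases h : zp p i
  · rw [bld_zero h, (hC.1 i).2 h]
  · rw [bld, dif_neg h]
    simp only [fwdV, Function.Embedding.coeFn_mk]
    have hzr : ¬ zp p (rep p i) := fun hz => h (zp_rep_iff.1 hz)
    have hσr : σ (rep p i) ≠ 0 := cond_ne_zero hC hzr
    have hb2 := abs_le.1 (mem_Bx.1 hB (rep p i))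
    have key : (if (decide (0 < σ (rep p i))) then (1:ℤ) else -1) *
        ((((σ (rep p i)).natAbs - 1 : ℕ) : ℤ) + 1) = σ (rep p i) := by
      by_cases hpos : 0 < σ (rep p i)
      · rw [if_pos (by simp [hpos])]
        omega
      · rw [if_neg (by simp [hpos])]
        omega
    have h3 : σ i = sgn p i * σ (rep p i) := by
      rcases rep_sgn_rel (p := p) h with ⟨h1, h2⟩ | ⟨h1, h2⟩
      · have := (hC.2 (rep p i) i).1.2 h2
        rw [h1]; omega
      · have := (hC.2 (rep p i) i).2.2 h2
        rw [h1]; omega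
    rw [mul_assoc]
    change sgn p i * ((if decide (0 < σ (rep p i)) = true then (1:ℤ) else -1) *
        ((((σ (rep p i)).natAbs - 1 : ℕ) : ℤ) + 1)) = σ i
    rw [key]
    exact h3.symm

open scoped Classical in
lemma bld_at_rep (s : ↥(RS p) → Bool) (v : ↥(RS p) ↪ Fin k) (r : ↥(RS p)) :
    bld p s v (r : Fin n) = (if s r then (1:ℤ) else -1) * (((v r : Fin k) : ℤ) + 1) := by
  obtain ⟨hzr, hrep⟩ := mem_RS_iff.1 r.2
  rw [bld, dif_neg hzr]
  have h1 : sgn p (r : Fin n) = 1 := sgn_of_mem_RS r.2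
  have h2 : (⟨rep p (r : Fin n), rep_mem_RS hzr⟩ : ↥(RS p)) = r := Subtype.ext hrep
  rw [h1, h2]
  ring

open scoped Classical in
lemma fwdS_bld (s : ↥(RS p) → Bool) (v : ↥(RS p) ↪ Fin k) (r : ↥(RS p)) :
    decide (0 < bld p s v (r : Fin n)) = s r := by
  have hb := bld_val_bounds (v := v) r
  cases hsr : s r
  · rw [bld_at_rep s v r, hsr]
    apply decide_eq_false
    simp only [Bool.false_eq_true, if_false]
    omega
  · rw [bld_at_rep s v r, hsr]
    apply decide_eq_true
    simp only [if_true]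
    omega

open scoped Classical in
lemma fwdV_bld (s : ↥(RS p) → Bool) (v : ↥(RS p) ↪ Fin k) (r : ↥(RS p)) :
    (bld p s v (r : Fin n)).natAbs - 1 = ((v r : Fin k) : ℕ) := by
  have hb := bld_val_bounds (v := v) r
  rw [bld_at_rep s v r]
  cases hsr : s r <;> simp only [Bool.false_eq_true, if_false, if_true] <;> omega

open scoped Classical in
/-- The bijection between colorings with pattern `p` and sign/value data. -/
noncomputable def condEquiv (p : Set (Fin n → ℝ)) (k : ℕ) :
    {σ : Fin n → ℤ // σ ∈ (Bx n k).filter (fun σ => Cond p σ)} ≃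
      ((↥(RS p) → Bool) × (↥(RS p) ↪ Fin k)) where
  toFun σ' := ⟨fun r => decide (0 < σ'.1 (r : Fin n)), fwdV σ'⟩
  invFun sv := ⟨bld p sv.1 sv.2, Finset.mem_filter.2 ⟨bld_mem_Bx _ _, bld_cond _ _⟩⟩
  left_inv σ' := Subtype.ext (bld_fwd σ')
  right_inv sv := by
    refine Prod.ext ?_ ?_
    · funext r
      exact fwdS_bld sv.1 sv.2 r
    · apply Function.Embedding.ext
      intro r
      apply Fin.ext
      simp only [fwdV, Function.Embedding.coeFn_mk]
      exact fwdV_bld sv.1 sv.2 r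

open scoped Classical in
lemma card_cond_filter (p : Set (Fin n → ℝ)) (k : ℕ) :
    ((Bx n k).filter (fun σ => Cond p σ)).card =
      2 ^ (RS p).card * Nat.descFactorial k (RS p).card := by
  rw [← Fintype.card_coe, Fintype.card_congr (condEquiv p k), Fintype.card_prod,
    Fintype.card_fun, Fintype.card_bool, Fintype.card_coe,
    Fintype.card_embedding_eq, Fintype.card_fin, Fintype.card_coe]

end CP

open CP

theorem chrom_eq_sum_whitney {n k : ℕ} (G : SGraph (Fin n))
    (hG : NoBadLoops G)
    (F : Finset (Set (Fin n → ℝ)))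
    (hF : ∀ p, p ∈ F ↔ (IsFlat n p ∧ ∀ e, ¬ p ⊆ hypOfEdge (G.edge e))) :
    chrom G k = ∑ i ∈ Finset.range (n + 1),
      (F.filter fun p => rk n p = n - i).card * (2 ^ i * Nat.descFactorial k i) := by
  classical
  have hProper : ∀ σ, Proper G k σ ↔ ((∀ i, |σ i| ≤ (k : ℤ)) ∧ flatZ σ ∈ F) :=
    proper_iff hG F hF
  -- Step 1: chrom as a Finset cardinality
  have hset : {σ : Fin n → ℤ | Proper G k σ} =
      ↑((Bx n k).filter (fun σ => Proper G k σ)) := by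
    ext σ
    simp only [Set.mem_setOf_eq, Finset.mem_coe, Finset.mem_filter]
    exact ⟨fun h => ⟨mem_Bx.2 h.1, h⟩, fun h => h.2⟩
  have h1 : chrom G k = ((Bx n k).filter (fun σ => Proper G k σ)).card := by
    rw [chrom, ← Set.coe_setOf, Nat.card_coe_set_eq, hset, Set.ncard_coe_finset]
  -- Step 2: group by the minimal flat
  have hmaps : ∀ σ ∈ (Bx n k).filter (fun σ => Proper G k σ), flatZ σ ∈ F :=
    fun σ hσ => ((hProper σ).1 (Finset.mem_filter.1 hσ).2).2
  have h2 : ((Bx n k).filter (fun σ => Proper G k σ)).card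
      = ∑ p ∈ F, ((Bx n k).filter (fun σ => flatZ σ = p)).card := by
    rw [Finset.card_eq_sum_card_fiberwise hmaps]
    apply Finset.sum_congr rfl
    intro p hp
    rw [Finset.filter_filter]
    congr 1
    apply Finset.filter_congr
    intro σ hσ
    constructor
    · exact And.right
    · intro h
      exact ⟨(hProper σ).2 ⟨mem_Bx.1 hσ, h ▸ hp⟩, h⟩
  -- Step 3: per-flat count
  have h3 : ∀ p ∈ F, ((Bx n k).filter (fun σ => flatZ σ = p)).card
      = 2 ^ (RS p).card * Nat.descFactorial k (RS p).card := by
    intro p hp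
    have hpf : IsFlat n p := ((hF p).1 hp).1
    rw [Finset.filter_congr (fun σ _ => flatZ_eq_iff_cond hpf), card_cond_filter]
  rw [h1, h2, Finset.sum_congr rfl h3]
  -- Step 4: regroup by rank
  rw [← Finset.sum_fiberwise_of_maps_to (g := fun p => (RS p).card)
      (t := Finset.range (n + 1))
      (fun p _ => Finset.mem_range.2 (Nat.lt_succ_of_le (card_RS_le p)))
      (fun p => 2 ^ (RS p).card * Nat.descFactorial k (RS p).card)]
  apply Finset.sum_congr rfl
  intro i hi
  have hfil : F.filter (fun p => (RS p).card = i) = F.filter (fun p => rk n p = n - i) := by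
    apply Finset.filter_congr
    intro p hp
    have hpf : IsFlat n p := ((hF p).1 hp).1
    rw [rk_eq hpf]
    have h4 := card_RS_le p
    have hin := Finset.mem_range.1 hi
    constructor
    · intro h; omega
    · intro h; omega
  calc ∑ p ∈ F.filter (fun p => (RS p).card = i),
        2 ^ (RS p).card * Nat.descFactorial k (RS p).card
      = ∑ _p ∈ F.filter (fun p => (RS p).card = i), 2 ^ i * Nat.descFactorial k i :=
        Finset.sum_congr rfl (fun p hp => by rw [(Finset.mem_filter.1 hp).2])
    _ = (F.filter (fun p => (RS p).card = i)).card * (2 ^ i * Nat.descFactorial k i) := by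
        rw [Finset.sum_const, smul_eq_mul]
    _ = (F.filter (fun p => rk n p = n - i)).card * (2 ^ i * Nat.descFactorial k i) := by
        rw [hfil]
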